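/- arXiv:1104.2524 — 2 statements merged into one kernel-verified Lean document; each statement's English description precedes it below -/
import Mathlib

section
/- Let G be a chordal graph, let T be a clique tree of G and let τ = ε_T. Let (C_1, C_2, S_1), (C_2, C_3, S_2), …, (C_{k−1}, C_k, S_{k−1}) be an augmenting path of τ whose cliques C_1, …, C_k are pairwise distinct, and let τ' be the token assignment obtained by applying the augmenting path. Suppose τ' is realizable, say τ' = ε_{T'} for a clique tree T' of G. Then for every vertex u of G, |L(T'_u)| ≤ |L(T_u)|, where T_u (respectively T'_u) is the subtree of T (respectively T') induced by the maximal cliques containing u. -/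
open SimpleGraph

/-- The degree of a vertex in a graph, via `Set.ncard`. -/
noncomputable def deg {W : Type*} (T : SimpleGraph W) (w : W) : ℕ :=
  (T.neighborSet w).ncard

/-- The set of leaves (degree-one vertices) of a graph. -/
def leaves {W : Type*} (T : SimpleGraph W) : Set W :=
  {w | deg T w = 1}

/-- The number of leaves. -/
noncomputable def numLeaves {W : Type*} (T : SimpleGraph W) : ℕ :=
  (leaves T).ncard

/-- The set of leaves of the subgraph of `T` induced by `s`
(nodes of `s` with exactly one neighbour inside `s`). -/
def subLeaves {W : Type*} (T : SimpleGraph W) (s : Set W) : Set W :=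
  {w | w ∈ s ∧ (T.neighborSet w ∩ s).ncard = 1}

/-- The number of leaves of the subtree induced by `s`. -/
noncomputable def numSubLeaves {W : Type*} (T : SimpleGraph W) (s : Set W) : ℕ :=
  (subLeaves T s).ncard

/-- A tree model of a graph `G`: a finite host tree `T` together with nonempty
subtrees `sub u` such that distinct vertices are adjacent in `G` iff their
subtrees intersect. -/
structure TreeModel {V : Type*} (G : SimpleGraph V) where
  W : Type
  finW : Finite W
  T : SimpleGraph W
  tree : T.IsTree
  sub : V → Set W
  sub_nonempty : ∀ u, (sub u).Nonempty
  sub_conn : ∀ u, (T.induce (sub u)).Connected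
  adj_iff : ∀ u v, u ≠ v → (G.Adj u v ↔ (sub u ∩ sub v).Nonempty)

/-- The leafage of a chordal graph: the minimum number of host-tree leaves over
all tree models. -/
noncomputable def leafage {V : Type*} (G : SimpleGraph V) : ℕ :=
  sInf {n | ∃ M : TreeModel G, numLeaves M.T = n}

/-- The vertex leafage of a chordal graph: the least `k` such that `G` has a tree
model all of whose subtrees have at most `k` leaves. -/
noncomputable def vleafage {V : Type*} (G : SimpleGraph V) : ℕ :=
  sInf {k | ∃ M : TreeModel G, ∀ u, numSubLeaves M.T (M.sub u) ≤ k}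

/-- A maximal clique of `G`. -/
def IsMaxClique {V : Type*} (G : SimpleGraph V) (C : Set V) : Prop :=
  G.IsClique C ∧ ∀ D, G.IsClique D → C ⊆ D → D = C

/-- The type of maximal cliques of `G`. -/
abbrev MaxCliques {V : Type*} (G : SimpleGraph V) := {C : Set V // IsMaxClique G C}

/-- A clique tree of `G`: a tree whose nodes are exactly the maximal cliques of `G`,
such that every node on the path between nodes `C` and `C'` contains `C ∩ C'`. -/
structure CliqueTree {V : Type*} (G : SimpleGraph V) where
  T : SimpleGraph (MaxCliques G)
  tree : T.IsTree
  path_cond : ∀ (C C' : MaxCliques G) (p : T.Walk C C'), p.IsPath →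
    ∀ C'' ∈ p.support, C.1 ∩ C'.1 ⊆ C''.1

/-- The subtree (node set) assigned to a vertex `u` in the tree model defined by a
clique tree of `G`: the set of maximal cliques containing `u`. -/
def cliqueSub {V : Type*} (G : SimpleGraph V) (u : V) : Set (MaxCliques G) :=
  {C | u ∈ C.1}

/-- The set of nodes of degree at least 3. -/
def Hh {W : Type*} (T : SimpleGraph W) : Set W := {w | 3 ≤ deg T w}

/-- The set of edges incident to a node of degree at least 3. -/
def Ee {W : Type*} (T : SimpleGraph W) : Set (Sym2 W) :=
  {e | e ∈ T.edgeSet ∧ ∃ w ∈ e, w ∈ Hh T}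

open scoped Classical in
/-- The token assignment `ε_T` defined by a clique tree: `ε_T(C)` is the multiset of
intersections `C ∩ C'` over the neighbours `C'` of `C` in the tree. -/
noncomputable def epsT {V : Type} [Fintype V] {G : SimpleGraph V} (CT : CliqueTree G)
    (C : MaxCliques G) : Multiset (Set V) :=
  ((CT.T.neighborSet C).toFinite.toFinset.val).map (fun C' => C.1 ∩ C'.1)

open scoped Classical in
/-- The token move `τ ÷ (C₁, C₂, S)`: one copy of `S` is removed from `τ(C₁)` and added
to `τ(C₂)`. -/
noncomputable def moveTok {V : Type} [Fintype V] {G : SimpleGraph V}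
    (τ : MaxCliques G → Multiset (Set V)) (C1 C2 : MaxCliques G) (S : Set V) :
    MaxCliques G → Multiset (Set V) :=
  fun D => if D = C1 then (τ C1).erase S else if D = C2 then S ::ₘ τ C2 else τ D

/-- A realizable token assignment: one defined by some clique tree of `G`. -/
def Realizable {V : Type} [Fintype V] (G : SimpleGraph V)
    (τ : MaxCliques G → Multiset (Set V)) : Prop :=
  ∃ CT : CliqueTree G, ∀ D, epsT CT D = τ D

/-- The token assignment obtained from `τ` by applying the first `j` token moves
`(C 0, C 1, S 0), …, (C (j-1), C j, S (j-1))`. -/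
noncomputable def applyPath {V : Type} [Fintype V] {G : SimpleGraph V}
    (τ : MaxCliques G → Multiset (Set V)) (C : ℕ → MaxCliques G) (S : ℕ → Set V) :
    ℕ → (MaxCliques G → Multiset (Set V))
  | 0 => τ
  | (j+1) => moveTok (applyPath τ C S j) (C j) (C (j+1)) (S j)

section AuxAP
variable {V : Type} [Fintype V] {G : SimpleGraph V}
variable (τ : MaxCliques G → Multiset (Set V)) (C : ℕ → MaxCliques G) (S : ℕ → Set V)

lemma aux14_cons_erase {α : Type*} [DecidableEq α] {a b : α} {M : Multiset α} (hb : b ∈ M) :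
    (a ::ₘ M).erase b = a ::ₘ M.erase b := by
  by_cases hab : b = a
  · subst hab
    rw [Multiset.erase_cons_head, Multiset.cons_erase hb]
  · rw [Multiset.erase_cons_tail]
    exact fun h => hab h.symm

lemma aux14_countP_erase {α : Type*} [DecidableEq α] (p : α → Prop) [DecidablePred p]
    {M : Multiset α} {S : α} (h : S ∈ M) :
    Multiset.countP p M = Multiset.countP p (M.erase S) + (if p S then 1 else 0) := by
  conv_lhs => rw [← Multiset.cons_erase h]
  rw [Multiset.countP_cons]

lemma aux14_ap_ne (m : ℕ) (D : MaxCliques G) (h : ∀ j, j ≤ m → D ≠ C j) :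
    applyPath τ C S m D = τ D := by
  induction m with
  | zero => rfl
  | succ n ih =>
    have h1 : D ≠ C n := h n (by omega)
    have h2 : D ≠ C (n+1) := h (n+1) le_rfl
    show moveTok (applyPath τ C S n) (C n) (C (n+1)) (S n) D = τ D
    rw [moveTok, if_neg h1, if_neg h2]
    exact ih (fun j hj => h j (by omega))

lemma aux14_ap_tip (m : ℕ) (hm : 1 ≤ m) (h : ∀ j, j < m → C m ≠ C j) :
    applyPath τ C S m (C m) = S (m-1) ::ₘ τ (C m) := by
  obtain ⟨n, rfl⟩ : ∃ n, m = n + 1 := ⟨m - 1, by omega⟩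
  show moveTok (applyPath τ C S n) (C n) (C (n+1)) (S n) (C (n+1)) = _
  have h1 : C (n+1) ≠ C n := h n (by omega)
  rw [moveTok, if_neg h1, if_pos rfl,
    aux14_ap_ne τ C S n _ (fun j hj => h j (by omega))]
  simp

open scoped Classical in
lemma aux14_ap_head (m : ℕ) (hm : 1 ≤ m) (h : ∀ j, 1 ≤ j → j ≤ m → C 0 ≠ C j) :
    applyPath τ C S m (C 0) = (τ (C 0)).erase (S 0) := by
  induction m with
  | zero => omega
  | succ n ih =>
    by_cases hn : n = 0
    · subst hn
      show moveTok (applyPath τ C S 0) (C 0) (C 1) (S 0) (C 0) = _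
      rw [moveTok, if_pos rfl]
      rfl
    · have h1 : C 0 ≠ C n := h n (by omega) (by omega)
      have h2 : C 0 ≠ C (n+1) := h (n+1) (by omega) le_rfl
      show moveTok (applyPath τ C S n) (C n) (C (n+1)) (S n) (C 0) = _
      rw [moveTok, if_neg h1, if_neg h2]
      exact ih (by omega) (fun j hj1 hj2 => h j hj1 (by omega))

open scoped Classical in
lemma aux14_ap_mid (j m : ℕ) (hj : 1 ≤ j) (hjm : j < m) (hS : S j ∈ τ (C j))
    (h : ∀ i, i ≤ m → i ≠ j → C j ≠ C i) :
    applyPath τ C S m (C j) = S (j-1) ::ₘ (τ (C j)).erase (S j) := by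
  induction m with
  | zero => omega
  | succ n ih =>
    by_cases hn : n = j
    · subst hn
      show moveTok (applyPath τ C S n) (C n) (C (n+1)) (S n) (C n) = _
      rw [moveTok, if_pos rfl,
        aux14_ap_tip τ C S n hj (fun i hi => h i (by omega) (by omega))]
      exact aux14_cons_erase hS
    · have h1 : C j ≠ C n := h n (by omega) (by omega)
      have h2 : C j ≠ C (n+1) := h (n+1) le_rfl (by omega)
      show moveTok (applyPath τ C S n) (C n) (C (n+1)) (S n) (C j) = _
      rw [moveTok, if_neg h1, if_neg h2]
      exact ih (by omega) (fun i hi1 hi2 => h i (by omega) hi2)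
end AuxAP

-- === aux lemmas ===
section Aux
variable {V : Type} [Fintype V] {G : SimpleGraph V}

open scoped Classical in
noncomputable def aux14_uc (u : V) (M : Multiset (Set V)) : ℕ :=
  Multiset.countP (fun s => u ∈ s) M

lemma aux14_token_subset (CT : CliqueTree G) (D : MaxCliques G) {S : Set V}
    (hS : S ∈ epsT CT D) : S ⊆ D.1 := by
  simp only [epsT, Multiset.mem_map] at hS
  obtain ⟨C', -, rfl⟩ := hS
  exact Set.inter_subset_left

lemma aux14_uc_eq (CT : CliqueTree G) (u : V) (D : MaxCliques G) (hu : u ∈ D.1) :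
    (CT.T.neighborSet D ∩ cliqueSub G u).ncard = aux14_uc u (epsT CT D) := by
  classical
  rw [aux14_uc, epsT, Multiset.countP_map, ← Finset.filter_val, ← Finset.card_def]
  have h2 : (CT.T.neighborSet D ∩ cliqueSub G u) =
      ↑((CT.T.neighborSet D).toFinite.toFinset.filter (fun C' => u ∈ D.1 ∩ C'.1)) := by
    ext C'
    simp only [Set.mem_inter_iff, Finset.coe_filter, Set.Finite.mem_toFinset,
      Set.mem_setOf_eq, cliqueSub]
    exact and_congr_right fun _ => by simp [hu]
  rw [h2, Set.ncard_coe_finset]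
  congr!

lemma aux14_uc_pos (CT : CliqueTree G) {u : V} {D D' : MaxCliques G} (hu : u ∈ D.1)
    (hu' : u ∈ D'.1) (hne : D ≠ D') : 1 ≤ aux14_uc u (epsT CT D) := by
  classical
  obtain ⟨w⟩ := CT.tree.isConnected.preconnected D D'
  obtain ⟨q, hp⟩ : ∃ q : CT.T.Walk D D', q.IsPath := ⟨w.toPath.1, w.toPath.2⟩
  cases q with
  | nil => exact absurd rfl hne
  | @cons _ w0 _ h r =>
    have hw0 : w0 ∈ (SimpleGraph.Walk.cons h r).support := by
      simp [SimpleGraph.Walk.support_cons, r.start_mem_support]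
    have hsub := CT.path_cond D D' (SimpleGraph.Walk.cons h r) hp w0 hw0
    have huw0 : u ∈ w0.1 := hsub ⟨hu, hu'⟩
    have hmem : D.1 ∩ w0.1 ∈ epsT CT D := by
      rw [epsT]
      exact Multiset.mem_map_of_mem _ (by simp [Set.Finite.mem_toFinset]; exact h)
    have : 0 < aux14_uc u (epsT CT D) :=
      Multiset.countP_pos.mpr ⟨D.1 ∩ w0.1, hmem, ⟨hu, huw0⟩⟩
    omega

open scoped Classical in
lemma aux14_uc_cons (u : V) (S : Set V) (M : Multiset (Set V)) :
    aux14_uc u (S ::ₘ M) = aux14_uc u M + (if u ∈ S then 1 else 0) :=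
  Multiset.countP_cons _ _ _

open scoped Classical in
lemma aux14_uc_erase (u : V) {M : Multiset (Set V)} {S : Set V} (h : S ∈ M) :
    aux14_uc u M = aux14_uc u (M.erase S) + (if u ∈ S then 1 else 0) :=
  aux14_countP_erase _ h

end Aux

/-- Let `τ = ε_T` for a clique tree `T` of `G`, let
`(C 0, C 1, S 0), …, (C (k-2), C (k-1), S (k-2))` be an augmenting path of `τ` (with
`k ≥ 2`) whose cliques `C 0, …, C (k-1)` are pairwise distinct, and let `τ'` be the
result of applying the augmenting path. If `τ'` is realizable, say `τ' = ε_{T'}` for a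
clique tree `T'`, then for every vertex `u` of `G`, `|L(T'_u)| ≤ |L(T_u)|`. -/
theorem stmt14 {V : Type} [Fintype V] (G : SimpleGraph V) (CT : CliqueTree G)
    (k : ℕ) (hk : 2 ≤ k) (C : ℕ → MaxCliques G) (S : ℕ → Set V)
    (hdist : ∀ i j, i < k → j < k → C i = C j → i = j)
    (hlast : (epsT CT (C (k - 1))).card = 1)
    (hfirst : 3 ≤ (epsT CT (C 0)).card)
    (hmid : ∀ j, 0 < j → j < k - 1 → (epsT CT (C j)).card = 2)
    (hmem : ∀ j, j < k - 1 → S j ∈ epsT CT (C j))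
    (hreal : ∀ j, j < k - 1 →
      Realizable G (moveTok (epsT CT) (C j) (C (j + 1)) (S j)))
    (CT' : CliqueTree G)
    (hfinal : ∀ D, epsT CT' D = applyPath (epsT CT) C S (k - 1) D) :
    ∀ u : V, numSubLeaves CT'.T (cliqueSub G u) ≤ numSubLeaves CT.T (cliqueSub G u) := by
  classical
  intro u
  obtain ⟨K, rfl⟩ : ∃ K, k = K + 1 := ⟨k - 1, by omega⟩
  have hK : 1 ≤ K := by omega
  simp only [Nat.add_sub_cancel] at hlast hmid hmem hreal hfinal
  have hne : ∀ i j, i ≤ K → j ≤ K → i ≠ j → C i ≠ C j := by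
    intro i j hi hj hij hC
    exact hij (hdist i j (by omega) (by omega) hC)
  have hSC1 : ∀ j, j < K → u ∈ S j → u ∈ (C j).1 :=
    fun j hj h => aux14_token_subset CT _ (hmem j hj) h
  have hSC2 : ∀ j, j < K → u ∈ S j → u ∈ (C (j+1)).1 := by
    intro j hj h
    obtain ⟨CTj, hCTj⟩ := hreal j hj
    have h1 : epsT CTj (C (j+1)) = S j ::ₘ epsT CT (C (j+1)) := by
      rw [hCTj, moveTok, if_neg (hne (j+1) j (by omega) (by omega) (by omega)), if_pos rfl]
    exact aux14_token_subset CTj _ (h1 ▸ Multiset.mem_cons_self _ _) h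
  have hC0 : epsT CT' (C 0) = (epsT CT (C 0)).erase (S 0) := by
    rw [hfinal]
    exact aux14_ap_head _ C S K hK (fun j h1 h2 => hne 0 j (by omega) (by omega) (by omega))
  have hCK : epsT CT' (C K) = S (K-1) ::ₘ epsT CT (C K) := by
    rw [hfinal]
    exact aux14_ap_tip _ C S K hK (fun j hj => hne K j le_rfl (by omega) (by omega))
  have hCmid : ∀ j, 0 < j → j < K →
      epsT CT' (C j) = S (j-1) ::ₘ (epsT CT (C j)).erase (S j) := by
    intro j h1 h2
    rw [hfinal]
    exact aux14_ap_mid _ C S j K h1 h2 (hmem j h2)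
      (fun i hi1 hi2 => hne j i (by omega) hi1 hi2.symm)
  have hCout : ∀ D, (∀ j, j ≤ K → D ≠ C j) → epsT CT' D = epsT CT D := by
    intro D hD; rw [hfinal]; exact aux14_ap_ne _ C S K D hD
  -- leaf sets as token conditions
  have hA : subLeaves CT'.T (cliqueSub G u) =
      {D | u ∈ D.1 ∧ aux14_uc u (epsT CT' D) = 1} := by
    ext D
    simp only [subLeaves, Set.mem_setOf_eq]
    constructor
    · rintro ⟨h1, h2⟩; exact ⟨h1, by rw [← aux14_uc_eq CT' u D h1]; exact h2⟩
    · rintro ⟨h1, h2⟩; exact ⟨h1, by rw [aux14_uc_eq CT' u D h1]; exact h2⟩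
  have hB : subLeaves CT.T (cliqueSub G u) =
      {D | u ∈ D.1 ∧ aux14_uc u (epsT CT D) = 1} := by
    ext D
    simp only [subLeaves, Set.mem_setOf_eq]
    constructor
    · rintro ⟨h1, h2⟩; exact ⟨h1, by rw [← aux14_uc_eq CT u D h1]; exact h2⟩
    · rintro ⟨h1, h2⟩; exact ⟨h1, by rw [aux14_uc_eq CT u D h1]; exact h2⟩
  rw [numSubLeaves, numSubLeaves, hA, hB]
  set A := {D : MaxCliques G | u ∈ D.1 ∧ aux14_uc u (epsT CT' D) = 1} with hAdef
  set B := {D : MaxCliques G | u ∈ D.1 ∧ aux14_uc u (epsT CT D) = 1} with hBdef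
  set R : Set (MaxCliques G) := {D | ∃ j, j ≤ K ∧ C j = D} with hRdef
  have hsplit : ∀ X : Set (MaxCliques G), X.ncard = (X ∩ R).ncard + (X \ R).ncard := by
    intro X
    rw [← Set.ncard_union_eq (Set.disjoint_left.mpr fun x hx hx' => hx'.2 hx.2)
      (Set.toFinite _) (Set.toFinite _), Set.inter_union_diff]
  have hdiff : A \ R = B \ R := by
    ext D
    simp only [Set.mem_diff, hAdef, hBdef, hRdef, Set.mem_setOf_eq]
    constructor
    · rintro ⟨⟨h1, h2⟩, h3⟩
      refine ⟨⟨h1, ?_⟩, h3⟩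
      rw [← hCout D (fun j hj hc => h3 ⟨j, hj, hc.symm⟩)]; exact h2
    · rintro ⟨⟨h1, h2⟩, h3⟩
      refine ⟨⟨h1, ?_⟩, h3⟩
      rw [hCout D (fun j hj hc => h3 ⟨j, hj, hc.symm⟩)]; exact h2
  rw [hsplit A, hsplit B, hdiff]
  have hmain : (A ∩ R).ncard ≤ (B ∩ R).ncard := by
    have hAimg : A ∩ R = C '' {j | j ≤ K ∧ u ∈ (C j).1 ∧ aux14_uc u (epsT CT' (C j)) = 1} := by
      ext D
      constructor
      · rintro ⟨⟨h1, h2⟩, j, hj, rfl⟩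
        exact ⟨j, ⟨hj, h1, h2⟩, rfl⟩
      · rintro ⟨j, ⟨hj, h1, h2⟩, rfl⟩
        exact ⟨⟨h1, h2⟩, j, hj, rfl⟩
    have hBimg : B ∩ R = C '' {j | j ≤ K ∧ u ∈ (C j).1 ∧ aux14_uc u (epsT CT (C j)) = 1} := by
      ext D
      constructor
      · rintro ⟨⟨h1, h2⟩, j, hj, rfl⟩
        exact ⟨j, ⟨hj, h1, h2⟩, rfl⟩
      · rintro ⟨j, ⟨hj, h1, h2⟩, rfl⟩
        exact ⟨⟨h1, h2⟩, j, hj, rfl⟩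
    have hinj : ∀ s : Set ℕ, s ⊆ {j | j ≤ K} → Set.InjOn C s := by
      intro s hs i hi j hj hij
      exact hdist i j (by have := hs hi; simp at this; omega)
        (by have := hs hj; simp at this; omega) hij
    rw [hAimg, hBimg,
      Set.ncard_image_of_injOn (hinj _ (fun j hj => hj.1)),
      Set.ncard_image_of_injOn (hinj _ (fun j hj => hj.1))]
    have hsetA : {j | j ≤ K ∧ u ∈ (C j).1 ∧ aux14_uc u (epsT CT' (C j)) = 1} =
        ↑((Finset.range (K+1)).filter
          (fun j => u ∈ (C j).1 ∧ aux14_uc u (epsT CT' (C j)) = 1)) := by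
      ext j; simp [Nat.lt_succ_iff]
    have hsetB : {j | j ≤ K ∧ u ∈ (C j).1 ∧ aux14_uc u (epsT CT (C j)) = 1} =
        ↑((Finset.range (K+1)).filter
          (fun j => u ∈ (C j).1 ∧ aux14_uc u (epsT CT (C j)) = 1)) := by
      ext j; simp [Nat.lt_succ_iff]
    rw [hsetA, hsetB, Set.ncard_coe_finset, Set.ncard_coe_finset]
    -- now a Finset.card inequality, via integer sums
    have key : ∀ j ∈ Finset.range (K+1),
        (if u ∈ (C j).1 ∧ aux14_uc u (epsT CT' (C j)) = 1 then (1:ℤ) else 0) ≤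
        (if u ∈ (C j).1 ∧ aux14_uc u (epsT CT (C j)) = 1 then (1:ℤ) else 0) +
          ((if j < K then (if u ∈ S j then (1:ℤ) else 0) else 0) -
           (if j = 0 then 0 else (if u ∈ S (j-1) then (1:ℤ) else 0))) := by
      intro j hj
      rw [Finset.mem_range] at hj
      rcases Nat.eq_zero_or_pos j with rfl | hj0
      · -- j = 0
        by_cases h0 : u ∈ S 0
        · rw [if_pos (show 0 < K from hK), if_pos h0, if_pos rfl]
          split_ifs <;> norm_num
        · have huc : aux14_uc u (epsT CT' (C 0)) = aux14_uc u (epsT CT (C 0)) := by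
            rw [hC0, aux14_uc_erase u (hmem 0 hK), if_neg h0, add_zero]
          rw [huc, if_pos (show 0 < K from hK), if_neg h0, if_pos rfl]
          simp
      · rcases Nat.lt_or_ge j K with hjK | hjK
        · -- 0 < j < K
          obtain ⟨i, rfl⟩ : ∃ i, j = i + 1 := ⟨j - 1, by omega⟩
          have hje := hCmid (i+1) (by omega) hjK
          simp only [Nat.add_sub_cancel] at hje
          have e1 : aux14_uc u (epsT CT' (C (i+1))) =
              aux14_uc u ((epsT CT (C (i+1))).erase (S (i+1))) +
                (if u ∈ S i then 1 else 0) := by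
            rw [hje, aux14_uc_cons]
          have e2 : aux14_uc u (epsT CT (C (i+1))) =
              aux14_uc u ((epsT CT (C (i+1))).erase (S (i+1))) +
                (if u ∈ S (i+1) then 1 else 0) :=
            aux14_uc_erase u (hmem (i+1) hjK)
          rw [if_pos hjK, if_neg (by omega : ¬ i + 1 = 0)]
          simp only [Nat.add_sub_cancel]
          by_cases hi : u ∈ S i <;> by_cases hi1 : u ∈ S (i+1)
          · -- both: equal
            rw [if_pos hi] at e1; rw [if_pos hi1] at e2
            have huc : aux14_uc u (epsT CT' (C (i+1))) = aux14_uc u (epsT CT (C (i+1))) := by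
              omega
            rw [huc, if_pos hi, if_pos hi1]
            simp
          · -- u ∈ S i, u ∉ S (i+1) : hard case
            rw [if_pos hi] at e1; rw [if_neg hi1, add_zero] at e2
            have huC : u ∈ (C (i+1)).1 := hSC2 i (by omega) hi
            have huCi : u ∈ (C i).1 := hSC1 i (by omega) hi
            have hpos : 1 ≤ aux14_uc u (epsT CT (C (i+1))) :=
              aux14_uc_pos CT huC huCi (hne (i+1) i (by omega) (by omega) (by omega))
            have hcard : Multiset.card (epsT CT' (C (i+1))) = 2 := by
              rw [hje, Multiset.card_cons, Multiset.card_erase_of_mem (hmem (i+1) hjK),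
                hmid (i+1) (by omega) hjK]
              rfl
            have hle : aux14_uc u (epsT CT' (C (i+1))) ≤ 2 := by
              rw [← hcard]; exact Multiset.countP_le_card _ _
            have h1 : aux14_uc u (epsT CT (C (i+1))) = 1 := by omega
            have h2 : aux14_uc u (epsT CT' (C (i+1))) = 2 := by omega
            have hP : u ∈ (C (i+1)).1 ∧ aux14_uc u (epsT CT (C (i+1))) = 1 := ⟨huC, h1⟩
            have hP' : ¬(u ∈ (C (i+1)).1 ∧ aux14_uc u (epsT CT' (C (i+1))) = 1) :=
              fun h => absurd h.2 (by omega)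
            rw [if_pos hP, if_neg hP', if_neg hi1, if_pos hi]
            norm_num
          · -- u ∉ S i, u ∈ S (i+1) : trivial
            rw [if_pos hi1, if_neg hi]
            split_ifs <;> norm_num
          · -- neither: equal
            rw [if_neg hi, add_zero] at e1; rw [if_neg hi1, add_zero] at e2
            have huc : aux14_uc u (epsT CT' (C (i+1))) = aux14_uc u (epsT CT (C (i+1))) := by
              omega
            rw [huc, if_neg hi, if_neg hi1]
            simp
        · -- j = K
          have hjK' : j = K := by omega
          rw [hjK']
          have e1 : aux14_uc u (epsT CT' (C K)) =
              aux14_uc u (epsT CT (C K)) + (if u ∈ S (K-1) then 1 else 0) := by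
            rw [hCK, aux14_uc_cons]
          rw [if_neg (lt_irrefl K), if_neg (by omega : ¬ K = 0)]
          by_cases hi : u ∈ S (K-1)
          · rw [if_pos hi] at e1
            have huC : u ∈ (C K).1 := by
              have := hSC2 (K-1) (by omega) hi
              rwa [show K - 1 + 1 = K by omega] at this
            have huCi : u ∈ (C (K-1)).1 := hSC1 (K-1) (by omega) hi
            have hpos : 1 ≤ aux14_uc u (epsT CT (C K)) :=
              aux14_uc_pos CT huC huCi (hne K (K-1) le_rfl (by omega) (by omega))
            have hle : aux14_uc u (epsT CT (C K)) ≤ 1 := by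
              rw [← hlast]; exact Multiset.countP_le_card _ _
            have h1 : aux14_uc u (epsT CT (C K)) = 1 := by omega
            have h2 : aux14_uc u (epsT CT' (C K)) = 2 := by omega
            have hP : u ∈ (C K).1 ∧ aux14_uc u (epsT CT (C K)) = 1 := ⟨huC, h1⟩
            have hP' : ¬(u ∈ (C K).1 ∧ aux14_uc u (epsT CT' (C K)) = 1) :=
              fun h => absurd h.2 (by omega)
            rw [if_pos hP, if_neg hP', if_pos hi]
            norm_num
          · rw [if_neg hi, add_zero] at e1
            rw [e1, if_neg hi]
            simp
    -- sum of the correction terms is zero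
    have hsum_d : ∑ j ∈ Finset.range (K+1),
        ((if j < K then (if u ∈ S j then (1:ℤ) else 0) else 0) -
         (if j = 0 then 0 else (if u ∈ S (j-1) then (1:ℤ) else 0))) = 0 := by
      rw [Finset.sum_sub_distrib]
      have h1 : ∑ j ∈ Finset.range (K+1),
          (if j < K then (if u ∈ S j then (1:ℤ) else 0) else 0) =
          ∑ j ∈ Finset.range K, (if u ∈ S j then (1:ℤ) else 0) := by
        rw [Finset.sum_range_succ, if_neg (lt_irrefl K), add_zero]
        exact Finset.sum_congr rfl (fun j hj => if_pos (Finset.mem_range.mp hj))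
      have h2 : ∑ j ∈ Finset.range (K+1),
          (if j = 0 then (0:ℤ) else (if u ∈ S (j-1) then (1:ℤ) else 0)) =
          ∑ j ∈ Finset.range K, (if u ∈ S j then (1:ℤ) else 0) := by
        rw [Finset.sum_range_succ']
        simp
      rw [h1, h2, sub_self]
    have hZ : (∑ j ∈ Finset.range (K+1),
        if u ∈ (C j).1 ∧ aux14_uc u (epsT CT' (C j)) = 1 then (1:ℤ) else 0) ≤
        ∑ j ∈ Finset.range (K+1),
        if u ∈ (C j).1 ∧ aux14_uc u (epsT CT (C j)) = 1 then (1:ℤ) else 0 := by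
      refine le_trans (Finset.sum_le_sum key) ?_
      rw [Finset.sum_add_distrib, hsum_d, add_zero]
    have key2 : ∀ (P : ℕ → Prop) [DecidablePred P],
        ((∑ j ∈ Finset.range (K+1), if P j then (1:ℕ) else 0 : ℕ) : ℤ) =
        ∑ j ∈ Finset.range (K+1), if P j then (1:ℤ) else 0 := by
      intro P _
      push_cast
      rfl
    rw [Finset.card_filter, Finset.card_filter]
    rw [← key2 _, ← key2 _] at hZ
    exact_mod_cast hZ
  omega
end

section
/- Let k ≥ 1 and let a_1, …, a_k and b_1, …, b_k be nonnegative integers such that: (1) for every i, if b_i = 1 then a_i ≥ 1; and (2) for every i with b_i = 1 and a_i ≥ 2, there exists j > i such that a_j = 1, b_j = 2, and a_r = b_r for all r with i < r < j. Then |{i : b_i = 1}| ≤ |{i : a_i = 1}|. -/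
/-- Let `a_1, …, a_k` and `b_1, …, b_k` (here indexed `0, …, k-1`) be nonnegative
integers such that (1) `b i = 1` implies `a i ≥ 1`, and (2) whenever `b i = 1` and
`a i ≥ 2` there is `j > i` with `a j = 1`, `b j = 2`, and `a r = b r` for all
`i < r < j`. Then `|{i : b i = 1}| ≤ |{i : a i = 1}|`. -/
theorem stmt15 (k : ℕ) (hk : 1 ≤ k) (a b : ℕ → ℕ)
    (h1 : ∀ i < k, b i = 1 → 1 ≤ a i)
    (h2 : ∀ i < k, b i = 1 → 2 ≤ a i →
      ∃ j, i < j ∧ j < k ∧ a j = 1 ∧ b j = 2 ∧ ∀ r, i < r → r < j → a r = b r) :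
    ((Finset.range k).filter (fun i => b i = 1)).card ≤
      ((Finset.range k).filter (fun i => a i = 1)).card := by
  classical
  set f : ℕ → ℕ := fun i =>
    if h : i < k ∧ b i = 1 ∧ 2 ≤ a i then (h2 i h.1 h.2.1 h.2.2).choose else i with hf
  have key : ∀ i ∈ (Finset.range k).filter (fun i => b i = 1),
      (a i = 1 ∧ f i = i) ∨
      (2 ≤ a i ∧ i < f i ∧ f i < k ∧ a (f i) = 1 ∧ b (f i) = 2 ∧
        ∀ r, i < r → r < f i → a r = b r) := by
    intro i hi
    simp only [Finset.mem_filter, Finset.mem_range] at hi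
    obtain ⟨hik, hbi⟩ := hi
    by_cases h2a : 2 ≤ a i
    · right
      have hcond : i < k ∧ b i = 1 ∧ 2 ≤ a i := ⟨hik, hbi, h2a⟩
      have hspec := (h2 i hik hbi h2a).choose_spec
      simp only [hf, dif_pos hcond]
      exact ⟨h2a, hspec⟩
    · left
      have ha1 : a i = 1 := le_antisymm (by omega) (h1 i hik hbi)
      have : ¬ (i < k ∧ b i = 1 ∧ 2 ≤ a i) := by tauto
      simp [hf, dif_neg this, ha1]
  apply Finset.card_le_card_of_injOn f
  · intro i hi
    simp only [Finset.mem_coe, Finset.mem_filter, Finset.mem_range] at hi ⊢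
    rcases key i (by simp [hi]) with ⟨ha, hfi⟩ | ⟨_, _, hfk, ha, _⟩
    · rw [hfi]; exact ⟨hi.1, ha⟩
    · exact ⟨hfk, ha⟩
  · intro i hi j hj hij
    rw [Finset.mem_coe] at hi hj
    rcases key i hi with ⟨hai, hfi⟩ | ⟨hai2, hlt, hfk, hafi, hbfi, har⟩ <;>
    rcases key j hj with ⟨haj, hfj⟩ | ⟨haj2, hlt', hfk', hafj, hbfj, har'⟩
    · rw [hfi, hfj] at hij; exact hij
    · -- f i = i, f j > j, b (f j) = 2, a (f j) = 1
      exfalso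
      rw [hfi] at hij
      simp only [Finset.mem_filter, Finset.mem_range] at hi
      rw [← hij] at hbfj
      omega
    · exfalso
      rw [hfj] at hij
      simp only [Finset.mem_filter, Finset.mem_range] at hj
      rw [hij] at hbfi
      omega
    · -- both map forward; suppose i ≠ j, wlog i < j
      by_contra hne
      simp only [Finset.mem_filter, Finset.mem_range] at hi hj
      rcases lt_or_gt_of_ne hne with h | h
      · have : a j = b j := har j h (by omega)
        omega
      · have : a i = b i := har' i h (by omega)
        omega
end
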